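/- Let n ≥ 1, A ∈ ℂ^{n×n}, and r ≥ 0 a real number. Suppose there exists a unit vector x₀ ∈ ℂⁿ with ‖A x₀‖ > r (strict feasibility), and suppose every z ∈ W_{≥r}(A) satisfies Re z > 0. Let A_h := (A + A*)/2 and A_s := (A − A*)/(2i). Then the set S := { g ∈ ℝ : there exists τ ≥ 0 such that g·A_h − A_s + τ·(A*A − r²·I) ⪯ 0 } is nonempty, and sup S = inf{ Im z / Re z : z ∈ W_{≥r}(A) }; moreover this supremum is attained (the infimum itself belongs to S). Equivalently, tan ψ̲_r(A) is the optimal value of the semidefinite program maximizing g subject to g·A_h − A_s + τ·(A*A − r²·I) ⪯ 0, τ ≥ 0. -/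

import Mathlib

open scoped ComplexOrder Matrix

noncomputable section

/-- The vertically projected Davis–Wielandt shell `W_{≥r}(A)`. -/
def wShell {n : ℕ} (A : Matrix (Fin n) (Fin n) ℂ) (r : ℝ) : Set ℂ :=
  { z | ∃ x : EuclideanSpace ℂ (Fin n), ‖x‖ = 1 ∧ r ≤ ‖Matrix.toEuclideanLin A x‖ ∧
      z = (inner ℂ x (Matrix.toEuclideanLin A x) : ℂ) }

/-- The cone over the joint numerical range of a linear operator is convex
(a cone version of the Toeplitz–Hausdorff theorem). -/
lemma cone_range_convex {E : Type*} [NormedAddCommGroup E] [InnerProductSpace ℂ E]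
    (L : E →ₗ[ℂ] E) : Convex ℝ {z : ℂ | ∃ x : E, z = inner ℂ x (L x)} := by
  intro p hp q hq a b ha hb hab
  by_cases hpq : p = q
  · subst hpq; rw [← add_smul, hab, one_smul]; exact hq
  obtain ⟨x, hx⟩ := hp
  obtain ⟨y, hy⟩ := hq
  set d : ℂ := p - q with hd
  have hd0 : d ≠ 0 := sub_ne_zero.mpr hpq
  set α : ℂ := inner ℂ x (L y) with hα
  set β : ℂ := inner ℂ y (L x) with hβ
  -- find unit u with Im(conj d * (conj u * α + u * β)) = 0
  have hu : ∃ u : ℂ, Complex.normSq u = 1 ∧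
      ((starRingEnd ℂ) d * ((starRingEnd ℂ) u * α + u * β)).im = 0 := by
    set P : ℂ := (starRingEnd ℂ) d * α with hP
    set Q : ℂ := (starRingEnd ℂ) d * β with hQ
    set Ac : ℝ := P.im + Q.im with hAc
    set Bc : ℝ := Q.re - P.re with hBc
    have key : ∀ u : ℂ, ((starRingEnd ℂ) d * ((starRingEnd ℂ) u * α + u * β)).im
        = u.re * Ac + u.im * Bc := by
      intro u
      have : (starRingEnd ℂ) d * ((starRingEnd ℂ) u * α + u * β)
          = (starRingEnd ℂ) u * P + u * Q := by ring
      rw [this]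
      simp [Complex.add_im, Complex.mul_im, Complex.conj_re, Complex.conj_im, hAc, hBc]
      ring
    by_cases h0 : Ac = 0 ∧ Bc = 0
    · exact ⟨1, by simp, by rw [key]; simp [h0.1, h0.2]⟩
    · have hR : (0:ℝ) < Real.sqrt (Ac ^ 2 + Bc ^ 2) := by
        apply Real.sqrt_pos.mpr
        rcases not_and_or.mp h0 with h | h <;> positivity
      set R := Real.sqrt (Ac ^ 2 + Bc ^ 2) with hRdef
      have hR2 : R ^ 2 = Ac ^ 2 + Bc ^ 2 := Real.sq_sqrt (by positivity)
      refine ⟨⟨Bc / R, -Ac / R⟩, ?_, ?_⟩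
      · simp only [Complex.normSq_mk]
        field_simp
        nlinarith [hR2]
      · rw [key]
        simp only [Complex.ofReal_div]
        field_simp
        ring
  obtain ⟨u, hu1, hu2⟩ := hu
  have hcu : (starRingEnd ℂ) u * u = 1 := by
    rw [mul_comm, Complex.mul_conj, hu1]; norm_num
  set m : ℂ := (starRingEnd ℂ) u * α + u * β with hmdef
  have hnsd : (Complex.normSq d : ℝ) ≠ 0 := ne_of_gt (Complex.normSq_pos.mpr hd0)
  set μ : ℝ := ((starRingEnd ℂ) d * m).re / Complex.normSq d with hμdef
  have hm : m = (μ : ℂ) * d := by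
    have h1 : (starRingEnd ℂ) d * m = (((starRingEnd ℂ) d * m).re : ℂ) := by
      apply Complex.ext <;> simp [hu2]
    have h2 : d * (starRingEnd ℂ) d = (Complex.normSq d : ℂ) := Complex.mul_conj d
    rw [hμdef]
    push_cast
    rw [div_mul_eq_mul_div, eq_div_iff (by exact_mod_cast hnsd)]
    calc m * (Complex.normSq d : ℂ) = ((starRingEnd ℂ) d * m) * d := by
          rw [← h2]; ring
      _ = (((starRingEnd ℂ) d * m).re : ℂ) * d := by rw [← h1]
  clear_value μ
  set v : ℝ → E := fun s => ((1 - s : ℝ) : ℂ) • (u • x) + ((s : ℝ) : ℂ) • y with hvdef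
  have hG : ∀ s : ℝ, (inner ℂ (v s) (L (v s)) : ℂ)
      = ((1 - s : ℝ) : ℂ) ^ 2 * p + ((s : ℝ) : ℂ) ^ 2 * q
        + ((s : ℝ) : ℂ) * ((1 - s : ℝ) : ℂ) * m := by
    intro s
    simp only [hvdef, map_add, map_smul, inner_add_left, inner_add_right,
      inner_smul_left, inner_smul_right, Complex.conj_ofReal, smul_eq_mul]
    rw [← hx, ← hy, ← hα, ← hβ, hmdef]
    push_cast
    linear_combination ((1:ℂ) - s) ^ 2 * p * hcu
  set φ : ℝ → ℝ := fun s => (1 - s) ^ 2 + s * (1 - s) * μ with hφdef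
  set ψ : ℝ → ℝ := fun s => (1 - s) ^ 2 + s ^ 2 with hψdef
  have hψpos : ∀ s : ℝ, 0 < ψ s := by
    intro s; simp only [hψdef]; nlinarith [sq_nonneg (1 - 2 * s)]
  have hGv : ∀ s : ℝ, (inner ℂ (v s) (L (v s)) : ℂ) = ((φ s : ℝ) : ℂ) * d + ((ψ s : ℝ) : ℂ) * q := by
    intro s
    simp only [hφdef, hψdef]
    rw [hG s, hm, hd]
    push_cast
    ring
  have hcont : ContinuousOn (fun s => φ s / ψ s) (Set.Icc (0:ℝ) 1) := by
    apply ContinuousOn.div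
    · fun_prop
    · fun_prop
    · exact fun s _ => (hψpos s).ne'
  have hmem : a ∈ Set.Icc (φ 1 / ψ 1) (φ 0 / ψ 0) := by
    constructor
    · simp only [hφdef, hψdef]; norm_num; exact ha
    · simp only [hφdef, hψdef]; norm_num; linarith
  obtain ⟨s, _, hχ⟩ := intermediate_value_Icc' (by norm_num : (0:ℝ) ≤ 1) hcont hmem
  refine ⟨((Real.sqrt (ψ s))⁻¹ : ℂ) • v s, ?_⟩
  have hc2 : ((Real.sqrt (ψ s))⁻¹ : ℝ) ^ 2 = (ψ s)⁻¹ := by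
    rw [← Real.sqrt_inv, Real.sq_sqrt (inv_nonneg.mpr (hψpos s).le)]
  have hb' : b = 1 - a := by linarith
  have hχ' : φ s = a * ψ s := by
    rw [div_eq_iff (hψpos s).ne'] at hχ
    exact hχ
  have e1 : ((Real.sqrt (ψ s) : ℝ) : ℂ)⁻¹ * ((Real.sqrt (ψ s) : ℝ) : ℂ)⁻¹ * ((ψ s : ℝ) : ℂ) = 1 := by
    have h9 : ((Real.sqrt (ψ s))⁻¹ * (Real.sqrt (ψ s))⁻¹ * ψ s : ℝ) = 1 := by
      rw [← mul_inv, Real.mul_self_sqrt (hψpos s).le]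
      exact inv_mul_cancel₀ (hψpos s).ne'
    exact_mod_cast congrArg (Complex.ofReal) h9
  have e2 : ((φ s : ℝ) : ℂ) = (a : ℂ) * ((ψ s : ℝ) : ℂ) := by
    exact_mod_cast congrArg Complex.ofReal hχ'
  rw [map_smul, inner_smul_left, inner_smul_right, map_inv₀, Complex.conj_ofReal, hGv s,
    Complex.real_smul, Complex.real_smul, hb', hd, e2]
  push_cast
  linear_combination (-((a : ℂ) * ((p:ℂ) - q) + q)) * e1

section helpers

variable {n : ℕ}

lemma toEuclideanLin_mul' (M N : Matrix (Fin n) (Fin n) ℂ) (x : EuclideanSpace ℂ (Fin n)) :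
    Matrix.toEuclideanLin (M * N) x = Matrix.toEuclideanLin M (Matrix.toEuclideanLin N x) := by
  simp [Matrix.toEuclideanLin_apply, Matrix.mulVec_mulVec]

lemma quad_dot' (N : Matrix (Fin n) (Fin n) ℂ) (v : Fin n → ℂ) :
    dotProduct (star v) (N *ᵥ v)
      = (inner ℂ ((WithLp.equiv 2 _).symm v)
          (Matrix.toEuclideanLin N ((WithLp.equiv 2 _).symm v)) : ℂ) := by
  rw [dotProduct_comm]; rfl

lemma herm_smul_real' (c : ℝ) {M : Matrix (Fin n) (Fin n) ℂ} (hM : M.IsHermitian) :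
    ((c : ℂ) • M).IsHermitian := by
  unfold Matrix.IsHermitian
  rw [Matrix.conjTranspose_smul, hM.eq, Complex.star_def, Complex.conj_ofReal]

lemma herm_Ah' (A : Matrix (Fin n) (Fin n) ℂ) : (((2 : ℂ))⁻¹ • (A + Aᴴ)).IsHermitian := by
  unfold Matrix.IsHermitian
  rw [Matrix.conjTranspose_smul, Matrix.conjTranspose_add, Matrix.conjTranspose_conjTranspose]
  rw [show star ((2:ℂ)⁻¹) = (2:ℂ)⁻¹ by simp]
  rw [add_comm]

lemma herm_As' (A : Matrix (Fin n) (Fin n) ℂ) :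
    (((2 * Complex.I))⁻¹ • (A - Aᴴ)).IsHermitian := by
  unfold Matrix.IsHermitian
  rw [Matrix.conjTranspose_smul, Matrix.conjTranspose_sub, Matrix.conjTranspose_conjTranspose]
  rw [show star ((2*Complex.I:ℂ)⁻¹) = -(2*Complex.I:ℂ)⁻¹ by simp [star_inv₀]]
  rw [(neg_sub A Aᴴ).symm.trans rfl, neg_smul, smul_neg, neg_neg]

lemma herm_C' (r : ℝ) (A : Matrix (Fin n) (Fin n) ℂ) :
    (Aᴴ * A - ((r : ℂ) ^ 2) • 1).IsHermitian := by
  apply Matrix.IsHermitian.sub (Matrix.isHermitian_conjTranspose_mul_self A)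
  have := herm_smul_real' (n := n) (r^2) Matrix.isHermitian_one
  push_cast at this ⊢
  exact this

lemma expand3' (M₁ M₂ M₃ : Matrix (Fin n) (Fin n) ℂ) (c₁ c₃ : ℂ) (x : EuclideanSpace ℂ (Fin n)) :
    (inner ℂ x (Matrix.toEuclideanLin (c₁ • M₁ - M₂ + c₃ • M₃) x) : ℂ)
      = c₁ * inner ℂ x (Matrix.toEuclideanLin M₁ x) - inner ℂ x (Matrix.toEuclideanLin M₂ x)
        + c₃ * inner ℂ x (Matrix.toEuclideanLin M₃ x) := by
  simp only [map_add, map_sub, map_smul, LinearMap.add_apply, LinearMap.sub_apply,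
    LinearMap.smul_apply, inner_add_right, inner_sub_right, inner_smul_right, smul_eq_mul]

variable (A : Matrix (Fin n) (Fin n) ℂ) (r : ℝ)

lemma pAconj' (x : EuclideanSpace ℂ (Fin n)) : (inner ℂ x (Matrix.toEuclideanLin Aᴴ x) : ℂ)
    = (starRingEnd ℂ) (inner ℂ x (Matrix.toEuclideanLin A x)) := by
  rw [Matrix.toEuclideanLin_conjTranspose_eq_adjoint, LinearMap.adjoint_inner_right,
    ← inner_conj_symm]

lemma pAh' (x : EuclideanSpace ℂ (Fin n)) :
    (inner ℂ x (Matrix.toEuclideanLin (((2 : ℂ))⁻¹ • (A + Aᴴ)) x) : ℂ)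
      = (((inner ℂ x (Matrix.toEuclideanLin A x) : ℂ)).re : ℂ) := by
  simp only [map_smul, map_add, LinearMap.smul_apply, LinearMap.add_apply, inner_smul_right,
    inner_add_right]
  rw [pAconj', Complex.add_conj]
  push_cast
  ring

lemma pAs' (x : EuclideanSpace ℂ (Fin n)) :
    (inner ℂ x (Matrix.toEuclideanLin (((2 * Complex.I))⁻¹ • (A - Aᴴ)) x) : ℂ)
      = (((inner ℂ x (Matrix.toEuclideanLin A x) : ℂ)).im : ℂ) := by
  simp only [map_smul, map_sub, LinearMap.smul_apply, LinearMap.sub_apply, inner_smul_right,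
    inner_sub_right]
  rw [pAconj', Complex.sub_conj]
  have : (2 * Complex.I : ℂ) ≠ 0 := by simp [Complex.I_ne_zero]
  field_simp
  push_cast
  ring

lemma pC' (x : EuclideanSpace ℂ (Fin n)) :
    (inner ℂ x (Matrix.toEuclideanLin (Aᴴ * A - ((r : ℂ) ^ 2) • 1) x) : ℂ)
      = ((‖Matrix.toEuclideanLin A x‖ ^ 2 - r ^ 2 * ‖x‖ ^ 2 : ℝ) : ℂ) := by
  rw [map_sub, LinearMap.sub_apply, inner_sub_right, map_smul, LinearMap.smul_apply,
    inner_smul_right]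
  rw [show Matrix.toEuclideanLin (Aᴴ * A) x = Matrix.toEuclideanLin Aᴴ (Matrix.toEuclideanLin A x)
    from toEuclideanLin_mul' _ _ _]
  rw [Matrix.toEuclideanLin_conjTranspose_eq_adjoint, LinearMap.adjoint_inner_right]
  rw [show Matrix.toEuclideanLin (1 : Matrix (Fin n) (Fin n) ℂ) x = x by
    simp [Matrix.toEuclideanLin_apply]]
  rw [inner_self_eq_norm_sq_to_K (𝕜 := ℂ), inner_self_eq_norm_sq_to_K (𝕜 := ℂ)]
  have cc : ∀ y : ℝ, Complex.ofReal y = @RCLike.ofReal ℂ _ y := fun y => rfl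
  simp only [← cc]
  push_cast
  ring

end helpers

set_option maxHeartbeats 1000000 in
/-- Lower-phase half of the paper's Proposition 3: `tan ψ̲_r(A)` equals the optimal value
of the SDP maximizing `g` subject to `g·A_h − A_s + τ·(A*A − r²·I) ⪯ 0`, `τ ≥ 0`. -/
theorem lower_constrained_phase_sdp {n : ℕ} (hn : 1 ≤ n)
    (A : Matrix (Fin n) (Fin n) ℂ) (r : ℝ) (hr : 0 ≤ r)
    (x₀ : EuclideanSpace ℂ (Fin n)) (hx₀ : ‖x₀‖ = 1)
    (hfeas : r < ‖Matrix.toEuclideanLin A x₀‖)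
    (hre : ∀ z ∈ wShell A r, 0 < z.re) :
    let Ah : Matrix (Fin n) (Fin n) ℂ := ((2 : ℂ))⁻¹ • (A + Aᴴ)
    let As : Matrix (Fin n) (Fin n) ℂ := ((2 * Complex.I))⁻¹ • (A - Aᴴ)
    let S : Set ℝ := { g | ∃ τ : ℝ, 0 ≤ τ ∧
      (-((g : ℂ) • Ah - As + (τ : ℂ) • (Aᴴ * A - ((r : ℂ) ^ 2) • 1))).PosSemidef }
    let T : Set ℝ := { t | ∃ z ∈ wShell A r, t = z.im / z.re }
    S.Nonempty ∧ sInf T ∈ S ∧ sSup S = sInf T := by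
  intro Ah As S T
  set LA := Matrix.toEuclideanLin A with hLA
  set hf : EuclideanSpace ℂ (Fin n) → ℝ := fun x => ((inner ℂ x (LA x) : ℂ)).re with hhf
  set sf : EuclideanSpace ℂ (Fin n) → ℝ := fun x => ((inner ℂ x (LA x) : ℂ)).im with hsf
  set cf : EuclideanSpace ℂ (Fin n) → ℝ := fun x => ‖LA x‖ ^ 2 - r ^ 2 * ‖x‖ ^ 2 with hcf
  -- the quadratic form of the SDP matrix
  have quadM : ∀ (g τ : ℝ) (x : EuclideanSpace ℂ (Fin n)),
      (inner ℂ x (Matrix.toEuclideanLin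
        ((g : ℂ) • Ah - As + (τ : ℂ) • (Aᴴ * A - ((r : ℂ) ^ 2) • 1)) x) : ℂ)
      = ((g * hf x - sf x + τ * cf x : ℝ) : ℂ) := by
    intro g τ x
    rw [show Ah = ((2 : ℂ))⁻¹ • (A + Aᴴ) from rfl, show As = ((2 * Complex.I))⁻¹ • (A - Aᴴ) from rfl]
    rw [expand3', pAh', pAs', pC']
    simp only [hhf, hsf, hcf, ← hLA]
    push_cast
    ring
  -- compactness of the shell and of T
  have hLAcont : Continuous LA := LinearMap.continuous_of_finiteDimensional LA
  have hshell : wShell A r = (fun x : EuclideanSpace ℂ (Fin n) => (inner ℂ x (LA x) : ℂ)) ''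
      (Metric.sphere 0 1 ∩ {x | r ≤ ‖LA x‖}) := by
    ext z
    constructor
    · rintro ⟨x, hx1, hx2, rfl⟩
      exact ⟨x, ⟨mem_sphere_zero_iff_norm.mpr hx1, hx2⟩, rfl⟩
    · rintro ⟨x, ⟨hx1, hx2⟩, rfl⟩
      exact ⟨x, mem_sphere_zero_iff_norm.mp hx1, hx2, rfl⟩
  have hshell_cpt : IsCompact (wShell A r) := by
    rw [hshell]
    refine IsCompact.image ?_ (Continuous.inner continuous_id hLAcont)
    exact (isCompact_sphere 0 1).inter_right
      (isClosed_le continuous_const (continuous_norm.comp hLAcont))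
  have hz₀mem : (inner ℂ x₀ (LA x₀) : ℂ) ∈ wShell A r := ⟨x₀, hx₀, hfeas.le, rfl⟩
  have hTim : T = (fun z : ℂ => z.im / z.re) '' wShell A r := by
    ext t
    constructor
    · rintro ⟨z, hz, rfl⟩; exact ⟨z, hz, rfl⟩
    · rintro ⟨z, hz, rfl⟩; exact ⟨z, hz, rfl⟩
  have hTne : T.Nonempty := ⟨_, _, hz₀mem, rfl⟩
  have hTcpt : IsCompact T := by
    rw [hTim]
    exact hshell_cpt.image_of_continuousOn
      ((Complex.continuous_im.continuousOn).div (Complex.continuous_re.continuousOn)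
        (fun z hz => (hre z hz).ne'))
  have hTbdd : BddBelow T := hTcpt.bddBelow
  -- every element of S is a lower bound for T
  have hSlb : ∀ g ∈ S, ∀ t ∈ T, g ≤ t := by
    rintro g ⟨τ, hτ, hpsd⟩ t ⟨z, ⟨x, hx1, hx2, rfl⟩, rfl⟩
    have hq := hpsd.dotProduct_mulVec_nonneg (WithLp.equiv 2 _ x)
    rw [Matrix.neg_mulVec, dotProduct_neg, quad_dot', Equiv.symm_apply_apply] at hq
    rw [quadM g τ x, ← Complex.ofReal_neg] at hq
    have hq' : 0 ≤ -(g * hf x - sf x + τ * cf x) := Complex.zero_le_real.mp hq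
    have hcx : 0 ≤ cf x := by
      have : r ^ 2 ≤ ‖LA x‖ ^ 2 := by nlinarith [norm_nonneg (LA x)]
      simp only [hcf, hx1]
      nlinarith
    have hzre : 0 < hf x := hre _ ⟨x, hx1, hx2, rfl⟩
    have h1 : g * hf x ≤ sf x := by nlinarith [mul_nonneg hτ hcx]
    exact (le_div_iff₀ hzre).mpr h1
  -- the S-procedure: sInf T ∈ S
  set g₀ : ℝ := sInf T with hg₀
  have hg₀S : g₀ ∈ S := by
    set Nmat : Matrix (Fin n) (Fin n) ℂ :=
      ((g₀ : ℂ) • Ah - As) + Complex.I • (Aᴴ * A - ((r : ℂ) ^ 2) • 1) with hNmat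
    have quadN : ∀ x : EuclideanSpace ℂ (Fin n),
        (inner ℂ x (Matrix.toEuclideanLin Nmat x) : ℂ)
          = ((g₀ * hf x - sf x : ℝ) : ℂ) + Complex.I * ((cf x : ℝ) : ℂ) := by
      intro x
      rw [show Nmat = (g₀ : ℂ) • (((2 : ℂ))⁻¹ • (A + Aᴴ)) - ((2 * Complex.I))⁻¹ • (A - Aᴴ)
        + Complex.I • (Aᴴ * A - ((r : ℂ) ^ 2) • 1) from rfl]
      rw [expand3', pAh', pAs', pC']
      simp only [hhf, hsf, hcf, ← hLA]
      push_cast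
      ring
    set K : Set ℂ := {z : ℂ | ∃ x : EuclideanSpace ℂ (Fin n),
      z = inner ℂ x (Matrix.toEuclideanLin Nmat x)} with hK
    have hKconv : Convex ℝ K := cone_range_convex _
    set O : Set ℂ := {z : ℂ | 0 < z.re ∧ 0 < z.im} with hO
    have hOopen : IsOpen O :=
      (isOpen_lt continuous_const Complex.continuous_re).inter
        (isOpen_lt continuous_const Complex.continuous_im)
    have hOconv : Convex ℝ O := by
      rintro z ⟨hz1, hz2⟩ w ⟨hw1, hw2⟩ a b ha hb hab
      have key : ∀ pp qq : ℝ, 0 < pp → 0 < qq → 0 < a * pp + b * qq := by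
        intro pp qq h1 h2
        rcases eq_or_lt_of_le ha with h | h
        · rw [← h]; simp only [zero_mul, zero_add]
          have : b = 1 := by linarith
          rw [this]; linarith
        · nlinarith
      constructor
      · simpa [Complex.real_smul, Complex.add_re, Complex.mul_re] using key z.re w.re hz1 hw1
      · simpa [Complex.real_smul, Complex.add_im, Complex.mul_im] using key z.im w.im hz2 hw2
    -- disjointness of the quadrant and the cone
    have hdisj : Disjoint O K := by
      rw [Set.disjoint_left]
      rintro z ⟨hz1, hz2⟩ ⟨x, rfl⟩
      rw [quadN x] at hz1 hz2
      simp only [Complex.add_re, Complex.add_im, Complex.ofReal_re, Complex.ofReal_im,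
        Complex.mul_re, Complex.mul_im, Complex.I_re, Complex.I_im] at hz1 hz2
      have hbx : 0 < g₀ * hf x - sf x := by linarith
      have hcx : 0 < cf x := by linarith
      have hx0 : x ≠ 0 := by
        intro h
        rw [h] at hcx
        simp [hcf, map_zero] at hcx
      have hxn : 0 < ‖x‖ := norm_pos_iff.mpr hx0
      have hALx : r * ‖x‖ < ‖LA x‖ := by
        have h2 : r ^ 2 * ‖x‖ ^ 2 < ‖LA x‖ ^ 2 := by simp only [hcf] at hcx; linarith
        nlinarith [norm_nonneg (LA x), mul_nonneg hr hxn.le]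
      set y : EuclideanSpace ℂ (Fin n) := ((‖x‖⁻¹ : ℝ) : ℂ) • x with hy
      have hyn : ‖y‖ = 1 := by
        rw [hy, norm_smul]
        simp [abs_of_pos (inv_pos.mpr hxn)]
        field_simp
      have hLAy : ‖LA y‖ = ‖x‖⁻¹ * ‖LA x‖ := by
        rw [hy, map_smul, norm_smul]
        simp [abs_of_pos (inv_pos.mpr hxn)]
      have hyr : r ≤ ‖LA y‖ := by
        rw [hLAy, le_inv_mul_iff₀ hxn]
        exact (mul_comm r ‖x‖ ▸ hALx.le)
      have hinner_y : (inner ℂ y (LA y) : ℂ) = ((((‖x‖⁻¹) ^ 2 : ℝ)) : ℂ) * inner ℂ x (LA x) := by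
        rw [hy, map_smul, inner_smul_left, inner_smul_right, Complex.conj_ofReal]
        push_cast
        ring
      have hymem : (inner ℂ y (LA y) : ℂ) ∈ wShell A r := ⟨y, hyn, hyr, rfl⟩
      have hyre : (inner ℂ y (LA y) : ℂ).re = (‖x‖⁻¹) ^ 2 * hf x := by
        rw [hinner_y, Complex.mul_re]
        simp only [Complex.ofReal_re, Complex.ofReal_im, hhf]
        ring
      have hyim : (inner ℂ y (LA y) : ℂ).im = (‖x‖⁻¹) ^ 2 * sf x := by
        rw [hinner_y, Complex.mul_im]
        simp only [Complex.ofReal_re, Complex.ofReal_im, hsf]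
        ring
      have hfac : 0 < (‖x‖⁻¹) ^ 2 := by positivity
      have hhfx : 0 < hf x := by
        have := hre _ hymem
        rw [hyre] at this
        nlinarith
      have hle : g₀ ≤ (inner ℂ y (LA y) : ℂ).im / (inner ℂ y (LA y) : ℂ).re :=
        csInf_le hTbdd ⟨_, hymem, rfl⟩
      rw [hyre, hyim, mul_div_mul_left _ _ (ne_of_gt hfac)] at hle
      rw [le_div_iff₀ hhfx] at hle
      linarith
    obtain ⟨f, u, hfO, hfK⟩ := geometric_hahn_banach_open hOconv hOopen hKconv hdisj
    have hK0 : (0 : ℂ) ∈ K := ⟨0, by simp⟩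
    have hu_le : u ≤ 0 := by simpa using hfK 0 hK0
    have h1I : f (1 + Complex.I) < u := hfO (1 + Complex.I) ⟨by simp, by simp⟩
    have hu_ge : 0 ≤ u := by
      by_contra h
      push_neg at h
      set ε : ℝ := -u / (|f (1 + Complex.I)| + 1) with hε
      have habs : 0 < |f (1 + Complex.I)| + 1 := by positivity
      have hεpos : 0 < ε := div_pos (by linarith) habs
      have hmem : (ε : ℝ) • (1 + Complex.I) ∈ O := by
        constructor <;>
          simp [Complex.real_smul, Complex.add_re, Complex.add_im, Complex.mul_re,
            Complex.mul_im, hεpos]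
      have hlt := hfO _ hmem
      rw [map_smul, smul_eq_mul] at hlt
      have he : ε * (|f (1 + Complex.I)| + 1) = -u := by
        rw [hε]; field_simp
      nlinarith [neg_abs_le (f (1 + Complex.I)), hεpos.le]
    have hu0 : u = 0 := le_antisymm hu_le hu_ge
    have hf1 : f 1 ≤ 0 := by
      by_contra h
      push_neg at h
      set ε : ℝ := f 1 / (2 * (|f Complex.I| + 1)) with hε
      have habs : 0 < |f Complex.I| + 1 := by positivity
      have hεpos : 0 < ε := div_pos h (by linarith)
      have hmem : (1 : ℂ) + (ε : ℝ) • Complex.I ∈ O := by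
        constructor <;>
          simp [Complex.real_smul, Complex.add_re, Complex.add_im, Complex.mul_re,
            Complex.mul_im, hεpos]
      have hlt := hfO _ hmem
      rw [map_add, map_smul, smul_eq_mul, hu0] at hlt
      have he : ε * (2 * (|f Complex.I| + 1)) = f 1 := by
        rw [hε]; field_simp
      nlinarith [neg_abs_le (f Complex.I), hεpos.le]
    have hfI : f Complex.I ≤ 0 := by
      by_contra h
      push_neg at h
      set ε : ℝ := f Complex.I / (2 * (|f 1| + 1)) with hε
      have habs : 0 < |f 1| + 1 := by positivity
      have hεpos : 0 < ε := div_pos h (by linarith)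
      have hmem : ((ε : ℝ) : ℂ) + Complex.I ∈ O := by
        constructor <;> simp [Complex.add_re, Complex.add_im, hεpos]
      have hlt := hfO _ hmem
      have hsplit : (((ε : ℝ) : ℂ) + Complex.I) = (ε : ℝ) • (1 : ℂ) + Complex.I := by
        simp [Complex.real_smul]
      rw [hsplit, map_add, map_smul, smul_eq_mul, hu0] at hlt
      have he : ε * (2 * (|f 1| + 1)) = f Complex.I := by
        rw [hε]; field_simp
      nlinarith [neg_abs_le (f 1), hεpos.le]
    have hflin : ∀ z : ℂ, f z = z.re * f 1 + z.im * f Complex.I := by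
      intro z
      have hzd : z = (z.re : ℝ) • (1 : ℂ) + (z.im : ℝ) • Complex.I := by
        apply Complex.ext <;> simp [Complex.real_smul, Complex.add_re, Complex.add_im,
          Complex.mul_re, Complex.mul_im]
      conv_lhs => rw [hzd]
      rw [map_add, map_smul, map_smul, smul_eq_mul, smul_eq_mul]
    have hsum : f 1 + f Complex.I < 0 := by
      have := h1I
      rw [hu0, map_add] at this
      linarith
    set αc : ℝ := -f 1 with hαc
    set βc : ℝ := -f Complex.I with hβc
    have hαnn : 0 ≤ αc := neg_nonneg.mpr hf1
    have hβnn : 0 ≤ βc := neg_nonneg.mpr hfI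
    have hKineq : ∀ x : EuclideanSpace ℂ (Fin n),
        αc * (g₀ * hf x - sf x) + βc * cf x ≤ 0 := by
      intro x
      have hx := hfK _ ⟨x, rfl⟩
      rw [hu0, hflin, quadN x] at hx
      simp only [Complex.add_re, Complex.add_im, Complex.ofReal_re, Complex.ofReal_im,
        Complex.mul_re, Complex.mul_im, Complex.I_re, Complex.I_im] at hx
      simp only [hαc, hβc]
      nlinarith
    have hcfx₀ : 0 < cf x₀ := by
      simp only [hcf, hx₀]
      nlinarith [hfeas, hr]
    rcases eq_or_lt_of_le hαnn with hα0 | hαpos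
    · exfalso
      have hβpos : 0 < βc := by
        rcases eq_or_lt_of_le hβnn with h | h
        · exfalso
          have hf1' : f 1 = -αc := by rw [hαc]; ring
          have hfI' : f Complex.I = -βc := by rw [hβc]; ring
          rw [hf1', hfI', ← hα0, ← h] at hsum
          norm_num at hsum
        · exact h
      have := hKineq x₀
      rw [← hα0] at this
      nlinarith
    · refine ⟨βc / αc, div_nonneg hβnn hαpos.le, Matrix.PosSemidef.of_dotProduct_mulVec_nonneg ?_ ?_⟩
      · -- Hermitian part
        have hM : ((g₀ : ℂ) • Ah - As + ((βc / αc : ℝ) : ℂ) •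
            (Aᴴ * A - ((r : ℂ) ^ 2) • 1)).IsHermitian := by
          apply Matrix.IsHermitian.add
          · exact Matrix.IsHermitian.sub (herm_smul_real' g₀ (herm_Ah' A)) (herm_As' A)
          · exact herm_smul_real' _ (herm_C' r A)
        exact hM.neg
      · -- quadratic form inequality
        intro v
        set x : EuclideanSpace ℂ (Fin n) := (WithLp.equiv 2 _).symm v with hxv
        have hineq : g₀ * hf x - sf x + (βc / αc) * cf x ≤ 0 := by
          have h := hKineq x
          have : g₀ * hf x - sf x + (βc / αc) * cf x
              = (αc * (g₀ * hf x - sf x) + βc * cf x) / αc := by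
            field_simp
          rw [this]
          exact div_nonpos_of_nonpos_of_nonneg h hαpos.le
        rw [Matrix.neg_mulVec, dotProduct_neg, quad_dot', ← hxv, quadM g₀ (βc / αc) x,
          ← Complex.ofReal_neg]
        exact Complex.zero_le_real.mpr (by linarith)
  -- assemble the three conclusions
  have hSne : S.Nonempty := ⟨g₀, hg₀S⟩
  refine ⟨hSne, hg₀S, ?_⟩
  have hSub : ∀ g ∈ S, g ≤ g₀ := fun g hg => le_csInf hTne (hSlb g hg)
  exact le_antisymm (csSup_le hSne hSub) (le_csSup ⟨g₀, hSub⟩ hg₀S)
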